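/- Let V_l : H_l → H_l ⊗ K (l = 1,2) be primitive isometries and T₁₂(X) = V₁*(X ⊗ id_K)V₂ on B(H₂, H₁). If T₁₂ has an eigenvalue c of modulus one, then there exists a unitary U : H₂ → H₁ such that V₂ = c(U* ⊗ id_K)V₁U, and moreover T₁₂(U) = cU. -/

import Mathlib

open Matrix Filter
open scoped Kronecker ComplexOrder

noncomputable section

/-- The action of `Φ ⊗ id_n` on block matrices, used to define complete positivity. -/
def tensorId {a b : Type*} (Φ : Matrix a a ℂ → Matrix b b ℂ) (n : ℕ)
    (X : Matrix (a × Fin n) (a × Fin n) ℂ) : Matrix (b × Fin n) (b × Fin n) ℂ :=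
  fun p q => Φ (fun i j => X (i, p.2) (j, q.2)) p.1 q.1

/-- A map between matrix algebras is completely positive if `Φ ⊗ id_n` preserves
positive semidefiniteness for every `n`. -/
def IsCompletelyPositive {a b : Type*} [Fintype a] [Fintype b]
    (Φ : Matrix a a ℂ → Matrix b b ℂ) : Prop :=
  ∀ (n : ℕ) (X : Matrix (a × Fin n) (a × Fin n) ℂ), X.PosSemidef → (tensorId Φ n X).PosSemidef

/-- The map `X ↦ V₁* (X ⊗ 1_K) V₂` on `B(H₂, H₁)`, as a linear endomorphism.
For `V₁ = V₂ = V` this is the Heisenberg channel associated with the isometry `V`. -/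
def sandwich {α β : Type*} [Fintype α] [Fintype β] {k : ℕ}
    (V₁ : Matrix (α × Fin k) α ℂ) (V₂ : Matrix (β × Fin k) β ℂ) :
    Module.End ℂ (Matrix α β ℂ) where
  toFun X := V₁ᴴ * (X ⊗ₖ (1 : Matrix (Fin k) (Fin k) ℂ)) * V₂
  map_add' X Y := by simp [Matrix.add_kronecker, Matrix.add_mul, Matrix.mul_add]
  map_smul' c X := by simp [Matrix.smul_kronecker, Matrix.smul_mul, Matrix.mul_smul]

/-- The Kraus operators `K_i` of an isometry `V : H → H ⊗ K`,
defined by `K_i φ = (id ⊗ ⟨i|) V φ`. -/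
def kraus {D k : ℕ} (V : Matrix (Fin D × Fin k) (Fin D) ℂ) (i : Fin k) :
    Matrix (Fin D) (Fin D) ℂ :=
  fun a b => V (a, i) b

/-- The `n`-step Kraus operator `K_{ι(n-1)} ⋯ K_{ι(0)}` associated with a word `ι`. -/
def krausString {D k : ℕ} (V : Matrix (Fin D × Fin k) (Fin D) ℂ) :
    (n : ℕ) → (Fin n → Fin k) → Matrix (Fin D) (Fin D) ℂ
  | 0, _ => 1
  | n + 1, ι => kraus V (ι (Fin.last n)) * krausString V n (fun m => ι m.castSucc)

/-- The output state `tr_H [V(n) ρ V(n)*]` after `n` steps, a density matrix on `K^⊗n`. -/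
def outputState {D k : ℕ} (V : Matrix (Fin D × Fin k) (Fin D) ℂ)
    (ρ : Matrix (Fin D) (Fin D) ℂ) (n : ℕ) :
    Matrix (Fin n → Fin k) (Fin n → Fin k) ℂ :=
  fun ι ι' => Matrix.trace (krausString V n ι * ρ * (krausString V n ι')ᴴ)

/-- The Schrödinger (predual) transition map `ρ ↦ Σ_i K_i ρ K_i*`. -/
def schrodinger {D k : ℕ} (V : Matrix (Fin D × Fin k) (Fin D) ℂ)
    (ρ : Matrix (Fin D) (Fin D) ℂ) : Matrix (Fin D) (Fin D) ℂ :=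
  ∑ i, kraus V i * ρ * (kraus V i)ᴴ

/-- A linear endomorphism of a matrix algebra is primitive if some power of it maps every
nonzero positive semidefinite matrix to a positive definite one. -/
def PrimitiveMap {α : Type*} [Fintype α] [DecidableEq α]
    (T : Module.End ℂ (Matrix α α ℂ)) : Prop :=
  ∃ n : ℕ, ∀ X : Matrix α α ℂ, X.PosSemidef → X ≠ 0 → ((T ^ n) X).PosDef

/-- An isometry `V : H → H ⊗ K` is primitive if its channel `X ↦ V*(X ⊗ 1)V` is primitive. -/
def PrimitiveIso {D k : ℕ} (V : Matrix (Fin D × Fin k) (Fin D) ℂ) : Prop :=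
  PrimitiveMap (sandwich V V)

/-- The pure state `|x⟩⟨x|` associated with a vector `x`. -/
def outer {α : Type*} (x : α → ℂ) : Matrix α α ℂ := Matrix.vecMulVec x (star x)

/-- The trace norm of a matrix: the trace of `√(A* A)`. -/
def traceNorm {α : Type*} [Fintype α] [DecidableEq α] (A : Matrix α α ℂ) : ℝ :=
  ((Matrix.posSemidef_conjTranspose_mul_self A).1.eigenvectorUnitary.1 *
      Matrix.diagonal ((fun x : ℝ => (x : ℂ)) ∘ (Real.sqrt ·) ∘ (Matrix.posSemidef_conjTranspose_mul_self A).1.eigenvalues) *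
      (star (Matrix.posSemidef_conjTranspose_mul_self A).1.eigenvectorUnitary : Matrix α α ℂ)).trace.re

/-- A quantum channel: a completely positive trace preserving linear map. -/
def IsCPTP {α β : Type*} [Fintype α] [Fintype β]
    (Φ : Matrix α α ℂ →ₗ[ℂ] Matrix β β ℂ) : Prop :=
  IsCompletelyPositive (Φ : Matrix α α ℂ → Matrix β β ℂ) ∧
    ∀ X : Matrix α α ℂ, (Φ X).trace = X.trace


/-! ### Auxiliary lemmas -/

lemma kron_conjT {m n p q : Type*} (A : Matrix m n ℂ) (B : Matrix p q ℂ) :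
    (A ⊗ₖ B)ᴴ = Aᴴ ⊗ₖ Bᴴ := by
  ext ⟨i, j⟩ ⟨k, l⟩
  simp [conjTranspose_apply, mul_comm]

lemma sandwich_apply' {α β : Type*} [Fintype α] [Fintype β] {k : ℕ}
    (V₁ : Matrix (α × Fin k) α ℂ) (V₂ : Matrix (β × Fin k) β ℂ) (X : Matrix α β ℂ) :
    sandwich V₁ V₂ X = V₁ᴴ * (X ⊗ₖ (1 : Matrix (Fin k) (Fin k) ℂ)) * V₂ := rfl

lemma kron_one_psd {α : Type*} [Fintype α] [DecidableEq α] {k : ℕ}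
    {X : Matrix α α ℂ} (hX : X.PosSemidef) :
    (X ⊗ₖ (1 : Matrix (Fin k) (Fin k) ℂ)).PosSemidef := by
  exact hX.kronecker Matrix.PosSemidef.one

lemma sandwich_psd {α : Type*} [Fintype α] [DecidableEq α] {k : ℕ}
    (V : Matrix (α × Fin k) α ℂ) {X : Matrix α α ℂ} (hX : X.PosSemidef) :
    (sandwich V V X).PosSemidef := by
  rw [sandwich_apply']
  exact (kron_one_psd hX).conjTranspose_mul_mul_same V

lemma sandwich_pow_psd {α : Type*} [Fintype α] [DecidableEq α] {k : ℕ}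
    (V : Matrix (α × Fin k) α ℂ) (n : ℕ) {X : Matrix α α ℂ} (hX : X.PosSemidef) :
    (((sandwich V V) ^ n) X).PosSemidef := by
  induction n generalizing X with
  | zero => simpa using hX
  | succ m ih =>
    rw [pow_succ, Module.End.mul_apply]
    exact ih (sandwich_psd V hX)

lemma sandwich_one' {α : Type*} [Fintype α] [DecidableEq α] {k : ℕ}
    (V : Matrix (α × Fin k) α ℂ) (hV : Vᴴ * V = 1) :
    sandwich V V (1 : Matrix α α ℂ) = 1 := by
  rw [sandwich_apply', one_kronecker_one, Matrix.mul_one, hV]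

lemma smul_one_eq_diag {α : Type*} [Fintype α] [DecidableEq α] (c : ℂ) :
    (c • (1 : Matrix α α ℂ)) = diagonal (fun _ => c) := by
  ext i j
  by_cases h : i = j <;> simp [Matrix.one_apply, Matrix.diagonal_apply, h]

/-- a subinvariant nonzero PSD element of a primitive unital channel is a positive
multiple of the identity. -/
lemma subinvariant_eq_smul_one {D k : ℕ} (hD : 0 < D)
    (V : Matrix (Fin D × Fin k) (Fin D) ℂ) (hV : Vᴴ * V = 1)
    (hP : PrimitiveMap (sandwich V V)) {A : Matrix (Fin D) (Fin D) ℂ}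
    (hA : A.PosSemidef) (hA0 : A ≠ 0)
    (hsub : (sandwich V V A - A).PosSemidef) :
    ∃ lam : ℝ, 0 < lam ∧ A = (lam : ℂ) • 1 := by
  have hH : A.IsHermitian := hA.1
  have : Nonempty (Fin D) := ⟨⟨0, hD⟩⟩
  obtain ⟨i₀, hi₀⟩ := Finite.exists_max hH.eigenvalues
  set lam : ℝ := hH.eigenvalues i₀ with hlam
  set U : Matrix (Fin D) (Fin D) ℂ := (hH.eigenvectorUnitary : Matrix (Fin D) (Fin D) ℂ) with hU
  set B : Matrix (Fin D) (Fin D) ℂ := (lam : ℂ) • 1 - A with hB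
  have hUU : U * star U = 1 := (Matrix.mem_unitaryGroup_iff).mp hH.eigenvectorUnitary.2
  have hBdiag : B = U * diagonal (fun i => ((lam - hH.eigenvalues i : ℝ) : ℂ)) * star U := by
    have hd : (diagonal (fun i => ((lam - hH.eigenvalues i : ℝ) : ℂ)) : Matrix (Fin D) (Fin D) ℂ)
        = diagonal (fun _ => (lam : ℂ)) - diagonal ((RCLike.ofReal : ℝ → ℂ) ∘ hH.eigenvalues) := by
      ext i j
      by_cases h : i = j <;> simp [Matrix.diagonal_apply, h, Complex.ofReal_sub]
    rw [hd, Matrix.mul_sub, Matrix.sub_mul, hB]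
    congr 1
    · rw [← smul_one_eq_diag, Matrix.mul_smul, Matrix.smul_mul, Matrix.mul_one, hUU]
    · exact hH.spectral_theorem
  have hBpsd : B.PosSemidef := by
    rw [hBdiag, Matrix.star_eq_conjTranspose]
    refine (posSemidef_diagonal_iff.mpr ?_).mul_mul_conjTranspose_same U
    intro i
    rw [Complex.zero_le_real]
    exact sub_nonneg.mpr (hi₀ i)
  set x : Fin D → ℂ := ⇑(hH.eigenvectorBasis i₀) with hx
  have hxn : x ≠ 0 := by
    intro h
    have hnorm := hH.eigenvectorBasis.orthonormal.1 i₀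
    rw [EuclideanSpace.norm_eq] at hnorm
    have hz : ∀ i, hH.eigenvectorBasis i₀ i = 0 := fun i => congrFun h i
    simp [hz] at hnorm
  have hBx : B *ᵥ x = 0 := by
    rw [hB, Matrix.sub_mulVec, Matrix.smul_mulVec, Matrix.one_mulVec]
    have h2 := hH.mulVec_eigenvectorBasis i₀
    rw [hx, h2, ← hlam, RCLike.real_smul_eq_coe_smul (K := ℂ)]
    simp
  have hB0 : B = 0 := by
    by_contra hB0
    obtain ⟨n, hn⟩ := hP
    have hpd := hn B hBpsd hB0
    have hdec : (B - sandwich V V B).PosSemidef := by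
      have he : B - sandwich V V B = sandwich V V A - A := by
        rw [hB, map_sub, _root_.map_smul, sandwich_one' V hV]
        abel
      rw [he]; exact hsub
    have hmono : ∀ m : ℕ, (B - ((sandwich V V) ^ m) B).PosSemidef := by
      intro m
      induction m with
      | zero => simpa using Matrix.PosSemidef.zero
      | succ m ih =>
        have key : B - ((sandwich V V) ^ (m + 1)) B
            = (B - ((sandwich V V) ^ m) B) + ((sandwich V V) ^ m) (B - sandwich V V B) := by
          simp only [pow_succ, Module.End.mul_apply, map_sub]
          abel
        rw [key]
        exact ih.add (sandwich_pow_psd V m hdec)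
    have h1 := (hmono n).dotProduct_mulVec_nonneg x
    have h2 := hpd.dotProduct_mulVec_pos hxn
    rw [Matrix.sub_mulVec, dotProduct_sub, hBx, dotProduct_zero, zero_sub] at h1
    have h3 : star x ⬝ᵥ ((sandwich V V ^ n) B) *ᵥ x ≤ 0 := by rwa [neg_nonneg] at h1
    exact absurd (lt_of_lt_of_le h2 h3) (lt_irrefl 0)
  have hAeq : A = (lam : ℂ) • 1 := (sub_eq_zero.mp hB0).symm
  refine ⟨lam, ?_, hAeq⟩
  have hge : (0 : ℝ) ≤ lam := hA.eigenvalues_nonneg i₀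
  rcases hge.lt_or_eq with h | h
  · exact h
  · exfalso
    apply hA0
    rw [hAeq, ← h]
    simp

lemma gap_eq {α β : Type*} [Fintype α] [DecidableEq α] [Fintype β] [DecidableEq β] {k : ℕ}
    (V₁ : Matrix (α × Fin k) α ℂ) (hV₁ : V₁ᴴ * V₁ = 1)
    (V₂ : Matrix (β × Fin k) β ℂ)
    (F : Matrix α β ℂ) (c : ℂ) (hcc : star c * c = 1)
    (hFe : V₁ᴴ * ((F ⊗ₖ (1 : Matrix (Fin k) (Fin k) ℂ)) * V₂) = c • F) :
    sandwich V₂ V₂ (Fᴴ * F) - Fᴴ * F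
      = ((1 - V₁ * V₁ᴴ) * ((F ⊗ₖ (1 : Matrix (Fin k) (Fin k) ℂ)) * V₂))ᴴ
        * ((1 - V₁ * V₁ᴴ) * ((F ⊗ₖ (1 : Matrix (Fin k) (Fin k) ℂ)) * V₂)) := by
  set P : Matrix (α × Fin k) (α × Fin k) ℂ := V₁ * V₁ᴴ with hP
  set M : Matrix (α × Fin k) β ℂ := (F ⊗ₖ (1 : Matrix (Fin k) (Fin k) ℂ)) * V₂ with hM
  have hPh : (1 - P)ᴴ = 1 - P := by
    rw [conjTranspose_sub, conjTranspose_one, hP, conjTranspose_mul, conjTranspose_conjTranspose]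
  have hPP : (1 - P) * (1 - P) = 1 - P := by
    have hpp : P * P = P := by
      rw [hP, Matrix.mul_assoc V₁ V₁ᴴ (V₁ * V₁ᴴ), ← Matrix.mul_assoc V₁ᴴ V₁ V₁ᴴ, hV₁,
        Matrix.one_mul]
    simp only [Matrix.mul_sub, Matrix.sub_mul, Matrix.one_mul, Matrix.mul_one, hpp]
    abel
  have hG : ((1 - P) * M)ᴴ * ((1 - P) * M) = Mᴴ * M - Mᴴ * (P * M) := by
    rw [conjTranspose_mul, hPh, Matrix.mul_assoc, ← Matrix.mul_assoc (1 - P) (1 - P) M, hPP,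
      Matrix.sub_mul, Matrix.one_mul, Matrix.mul_sub]
  have hMM : Mᴴ * M = sandwich V₂ V₂ (Fᴴ * F) := by
    rw [sandwich_apply', hM, conjTranspose_mul, kron_conjT, conjTranspose_one,
      Matrix.mul_assoc V₂ᴴ, ← Matrix.mul_assoc (Fᴴ ⊗ₖ 1) (F ⊗ₖ 1) V₂, ← mul_kronecker_mul,
      Matrix.one_mul, Matrix.mul_assoc]
  have hMPM : Mᴴ * (P * M) = Fᴴ * F := by
    have key : (V₁ᴴ * M)ᴴ * (V₁ᴴ * M) = Mᴴ * (P * M) := by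
      rw [conjTranspose_mul V₁ᴴ M, conjTranspose_conjTranspose,
        Matrix.mul_assoc Mᴴ V₁ (V₁ᴴ * M), ← Matrix.mul_assoc V₁ V₁ᴴ M, ← hP]
    rw [← key, hFe, conjTranspose_smul, Matrix.smul_mul, Matrix.mul_smul, smul_smul, hcc,
      one_smul]
  rw [hG, hMM, hMPM]

lemma conj_eig {α β : Type*} [Fintype α] [Fintype β] {k : ℕ}
    (V₁ : Matrix (α × Fin k) α ℂ) (V₂ : Matrix (β × Fin k) β ℂ)
    (F : Matrix α β ℂ) (c : ℂ)
    (h : V₁ᴴ * ((F ⊗ₖ (1 : Matrix (Fin k) (Fin k) ℂ)) * V₂) = c • F) :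
    V₂ᴴ * ((Fᴴ ⊗ₖ (1 : Matrix (Fin k) (Fin k) ℂ)) * V₁) = star c • Fᴴ := by
  have h2 := congrArg Matrix.conjTranspose h
  rw [conjTranspose_mul V₁ᴴ _, conjTranspose_mul _ V₂, conjTranspose_conjTranspose,
    kron_conjT, conjTranspose_one, conjTranspose_smul, Matrix.mul_assoc] at h2
  exact h2

/-- If `T₁₂(X) = V₁*(X ⊗ 1)V₂` has an eigenvalue `c` of modulus one, then there exists a
unitary `U : H₂ → H₁` with `V₂ = c (U* ⊗ 1) V₁ U` and `T₁₂(U) = c U`. -/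
theorem modulus_one_eigenvalue_gives_gauge_equivalence (D₁ D₂ k : ℕ)
    (V₁ : Matrix (Fin D₁ × Fin k) (Fin D₁) ℂ) (hV₁ : V₁ᴴ * V₁ = 1) (hP₁ : PrimitiveIso V₁)
    (V₂ : Matrix (Fin D₂ × Fin k) (Fin D₂) ℂ) (hV₂ : V₂ᴴ * V₂ = 1) (hP₂ : PrimitiveIso V₂)
    (c : ℂ) (hc : ‖c‖ = 1)
    (F : Matrix (Fin D₁) (Fin D₂) ℂ) (hF : F ≠ 0)
    (heig : sandwich V₁ V₂ F = c • F) :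
    ∃ U : Matrix (Fin D₁) (Fin D₂) ℂ, Uᴴ * U = 1 ∧ U * Uᴴ = 1 ∧
      V₂ = c • ((Uᴴ ⊗ₖ (1 : Matrix (Fin k) (Fin k) ℂ)) * V₁ * U) ∧
      sandwich V₁ V₂ U = c • U := by
  -- dimensions are positive
  have hD₁ : 0 < D₁ := by
    rcases Nat.eq_zero_or_pos D₁ with h | h
    · subst h; exact absurd (by ext i j; exact i.elim0) hF
    · exact h
  have hD₂ : 0 < D₂ := by
    rcases Nat.eq_zero_or_pos D₂ with h | h
    · subst h; exact absurd (by ext i j; exact j.elim0) hF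
    · exact h
  have hcc : star c * c = 1 := by
    have h1 : Complex.normSq c = 1 := by
      rw [← Complex.sq_norm, hc, one_pow]
    rw [Complex.star_def, ← Complex.normSq_eq_conj_mul_self, h1, Complex.ofReal_one]
  have hcc' : c * star c = 1 := by rw [mul_comm]; exact hcc
  have hFe : V₁ᴴ * ((F ⊗ₖ (1 : Matrix (Fin k) (Fin k) ℂ)) * V₂) = c • F := by
    have heq := heig
    rw [sandwich_apply'] at heq
    rw [← Matrix.mul_assoc]
    exact heq
  have hFeT : V₂ᴴ * ((Fᴴ ⊗ₖ (1 : Matrix (Fin k) (Fin k) ℂ)) * V₁) = star c • Fᴴ :=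
    conj_eig V₁ V₂ F c hFe
  -- F†F and FF† are subinvariant, hence positive multiples of the identity
  have hsub2 : (sandwich V₂ V₂ (Fᴴ * F) - Fᴴ * F).PosSemidef := by
    rw [gap_eq V₁ hV₁ V₂ F c hcc hFe]
    exact posSemidef_conjTranspose_mul_self _
  have hsub1 : (sandwich V₁ V₁ (F * Fᴴ) - F * Fᴴ).PosSemidef := by
    have hcc2 : star (star c) * star c = 1 := by rw [star_star]; exact hcc'
    have h := gap_eq V₂ hV₂ V₁ Fᴴ (star c) hcc2 hFeT
    rw [conjTranspose_conjTranspose] at h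
    rw [h]
    exact posSemidef_conjTranspose_mul_self _
  obtain ⟨lam, hlam, hFF⟩ := subinvariant_eq_smul_one hD₂ V₂ hV₂ hP₂
    (posSemidef_conjTranspose_mul_self F)
    (fun h => hF (Matrix.conjTranspose_mul_self_eq_zero.mp h)) hsub2
  obtain ⟨mu, hmu, hFFT⟩ := subinvariant_eq_smul_one hD₁ V₁ hV₁ hP₁
    (posSemidef_self_mul_conjTranspose F)
    (fun h => hF (Matrix.self_mul_conjTranspose_eq_zero.mp h)) hsub1
  -- equal dimensions
  have hrank2 : F.rank = D₂ := by
    have h := Matrix.rank_conjTranspose_mul_self F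
    rw [hFF, smul_one_eq_diag, Matrix.rank_diagonal] at h
    rw [← h]
    simp only [ne_eq, Complex.ofReal_ne_zero.mpr (ne_of_gt hlam), not_false_eq_true]
    exact (Fintype.card_congr (Equiv.subtypeUnivEquiv fun _ => trivial)).trans
      (Fintype.card_fin _)
  have hrank1 : F.rank = D₁ := by
    have h := Matrix.rank_self_mul_conjTranspose F
    rw [hFFT, smul_one_eq_diag, Matrix.rank_diagonal] at h
    rw [← h]
    simp only [ne_eq, Complex.ofReal_ne_zero.mpr (ne_of_gt hmu), not_false_eq_true]
    exact (Fintype.card_congr (Equiv.subtypeUnivEquiv fun _ => trivial)).trans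
      (Fintype.card_fin _)
  have hD12 : D₁ = D₂ := by rw [← hrank1, hrank2]
  -- lam = mu via traces
  have hlm : lam = mu := by
    have h := Matrix.trace_mul_comm Fᴴ F
    rw [hFF, hFFT] at h
    simp only [Matrix.trace_smul, Matrix.trace_one, smul_eq_mul, Fintype.card_fin] at h
    have hDne : ((D₂ : ℂ)) ≠ 0 := Nat.cast_ne_zero.mpr hD₂.ne'
    have h2 : (lam : ℂ) = (mu : ℂ) := by
      apply mul_right_cancel₀ hDne
      rw [h, hD12]
    exact_mod_cast h2
  -- construct the unitary
  set s : ℝ := Real.sqrt lam with hs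
  have hs0 : 0 < s := Real.sqrt_pos.mpr hlam
  have hsc : (s : ℂ) ≠ 0 := Complex.ofReal_ne_zero.mpr hs0.ne'
  have hss : (s : ℂ) * (s : ℂ) = (lam : ℂ) := by
    rw [← Complex.ofReal_mul, Real.mul_self_sqrt hlam.le]
  have hstars : star ((s : ℂ)⁻¹) = (s : ℂ)⁻¹ := by
    rw [star_inv₀]
    simp [Complex.star_def, Complex.conj_ofReal]
  set U : Matrix (Fin D₁) (Fin D₂) ℂ := (s : ℂ)⁻¹ • F with hUdef
  have hsc1 : (s : ℂ)⁻¹ * (s : ℂ)⁻¹ * (lam : ℂ) = 1 := by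
    rw [← hss]
    field_simp
  have hUU : Uᴴ * U = 1 := by
    rw [hUdef, conjTranspose_smul, Matrix.smul_mul, Matrix.mul_smul, hFF, smul_smul, smul_smul,
      hstars, hsc1, one_smul]
  have hUUT : U * Uᴴ = 1 := by
    rw [hUdef, conjTranspose_smul, Matrix.smul_mul, Matrix.mul_smul, hFFT, ← hlm, hstars,
      smul_smul, smul_smul, hsc1, one_smul]
  have hsU : sandwich V₁ V₂ U = c • U := by
    rw [hUdef, _root_.map_smul, heig, smul_comm]
  clear hUdef
  clear_value U
  have hVU : V₁ᴴ * ((U ⊗ₖ (1 : Matrix (Fin k) (Fin k) ℂ)) * V₂) = c • U := by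
    have heq := hsU
    rw [sandwich_apply'] at heq
    rw [← Matrix.mul_assoc]
    exact heq
  have hVUT : V₂ᴴ * ((Uᴴ ⊗ₖ (1 : Matrix (Fin k) (Fin k) ℂ)) * V₁) = star c • Uᴴ :=
    conj_eig V₁ V₂ U c hVU
  -- the defect W vanishes
  set N : Matrix (Fin D₁ × Fin k) (Fin D₂) ℂ
    := (U ⊗ₖ (1 : Matrix (Fin k) (Fin k) ℂ)) * V₂ with hN
  set L : Matrix (Fin D₁ × Fin k) (Fin D₂) ℂ := V₁ * U with hL
  have hNN : Nᴴ * N = 1 := by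
    rw [hN, conjTranspose_mul, kron_conjT, conjTranspose_one, Matrix.mul_assoc,
      ← Matrix.mul_assoc (Uᴴ ⊗ₖ 1) (U ⊗ₖ 1) V₂, ← mul_kronecker_mul, hUU, Matrix.one_mul,
      one_kronecker_one, Matrix.one_mul, hV₂]
  have hNL : Nᴴ * L = star c • 1 := by
    rw [hN, hL, conjTranspose_mul, kron_conjT, conjTranspose_one, Matrix.mul_assoc,
      ← Matrix.mul_assoc (Uᴴ ⊗ₖ (1 : Matrix (Fin k) (Fin k) ℂ)) V₁ U,
      ← Matrix.mul_assoc V₂ᴴ ((Uᴴ ⊗ₖ (1 : Matrix (Fin k) (Fin k) ℂ)) * V₁) U, hVUT,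
      Matrix.smul_mul, hUU]
  have hLN : Lᴴ * N = c • 1 := by
    rw [hL, conjTranspose_mul, Matrix.mul_assoc, hVU, Matrix.mul_smul, hUU]
  have hLL : Lᴴ * L = 1 := by
    rw [hL, conjTranspose_mul, Matrix.mul_assoc, ← Matrix.mul_assoc V₁ᴴ V₁ U, hV₁,
      Matrix.one_mul, hUU]
  set W : Matrix (Fin D₁ × Fin k) (Fin D₂) ℂ := N - c • L with hW
  have hWW : Wᴴ * W = 0 := by
    simp only [hW, conjTranspose_sub, conjTranspose_smul, Matrix.sub_mul, Matrix.mul_sub,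
      Matrix.smul_mul, Matrix.mul_smul, hNN, hNL, hLN, hLL, smul_smul, hcc, hcc',
      mul_comm (star c) c, one_smul]
    abel_nf
    simp
  have hW0 : W = 0 := Matrix.conjTranspose_mul_self_eq_zero.mp hWW
  have hNL2 : N = c • L := by
    have := sub_eq_zero.mp (hW ▸ hW0)
    exact this
  have hfinal : c • ((Uᴴ ⊗ₖ (1 : Matrix (Fin k) (Fin k) ℂ)) * V₁ * U) = V₂ := by
    calc c • ((Uᴴ ⊗ₖ (1 : Matrix (Fin k) (Fin k) ℂ)) * V₁ * U)
        = (Uᴴ ⊗ₖ (1 : Matrix (Fin k) (Fin k) ℂ)) * (c • (V₁ * U)) := by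
          rw [Matrix.mul_smul, Matrix.mul_assoc]
      _ = (Uᴴ ⊗ₖ (1 : Matrix (Fin k) (Fin k) ℂ)) * ((U ⊗ₖ (1 : Matrix (Fin k) (Fin k) ℂ)) * V₂) := by
          rw [← hL, ← hNL2, hN]
      _ = ((Uᴴ ⊗ₖ (1 : Matrix (Fin k) (Fin k) ℂ)) * (U ⊗ₖ (1 : Matrix (Fin k) (Fin k) ℂ))) * V₂ := by
          rw [Matrix.mul_assoc]
      _ = V₂ := by
          rw [← mul_kronecker_mul, hUU, Matrix.one_mul, one_kronecker_one, Matrix.one_mul]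
  exact ⟨U, hUU, hUUT, hfinal.symm, hsU⟩
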